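/- Let Γ be a numerical semigroup with δ := #(ℕ∖Γ) ≥ 1, let p,q ≥ 1 be integers, 0 ≤ a < p, and let t_a and τ_a be as defined. Then for every 0 ≤ t ≤ t_a: (i) τ_a(2t+1) = τ_a(2t) + #{γ ∈ Γ : γ ≤ (tp+a)/q}; (ii) τ_a(2t+1) > τ_a(2t); and (iii) if moreover Γ is symmetric, then τ_a(2t+1) > τ_a(2t+2). Consequently, when Γ is symmetric, the graded root (R_{τ_a},χ_{τ_a}) has exactly t_a + 2 local minimum points, corresponding to the values τ_a(2t), t = 0,1,…,t_a+1. -/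

import Mathlib

noncomputable section

/-- Pre-vertices of the graded root `R_τ` associated with `τ : {0,…,T₀} → ℤ`:
pairs `(i,k)` with `i ≤ T₀` and `τ i ≤ k`, representing the vertex `v_i^k`. -/
def RootVpre (T0 : ℕ) (τ : ℕ → ℤ) : Type := {x : ℕ × ℤ // x.1 ≤ T0 ∧ τ x.1 ≤ x.2}

/-- The identification `v_i^k ∼ v_j^k` whenever `k ≥ τ(l)` for every `l` between `i` and `j`. -/
def RootSetoid (T0 : ℕ) (τ : ℕ → ℤ) : Setoid (RootVpre T0 τ) where
  r x y := x.1.2 = y.1.2 ∧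
    ∀ l : ℕ, ((x.1.1 ≤ l ∧ l ≤ y.1.1) ∨ (y.1.1 ≤ l ∧ l ≤ x.1.1)) → τ l ≤ x.1.2
  iseqv := by
    constructor
    · intro x
      refine ⟨rfl, ?_⟩
      intro l hl
      have : l = x.1.1 := by omega
      rw [this]
      exact x.2.2
    · intro x y h
      refine ⟨h.1.symm, ?_⟩
      intro l hl
      rw [← h.1]
      exact h.2 l (by tauto)
    · intro x y z hxy hyz
      refine ⟨hxy.1.trans hyz.1, ?_⟩
      intro l hl
      have h2 := hxy.2
      have h3 := hyz.2
      rcases (by omega :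
          ((x.1.1 ≤ l ∧ l ≤ y.1.1) ∨ (y.1.1 ≤ l ∧ l ≤ x.1.1)) ∨
          ((y.1.1 ≤ l ∧ l ≤ z.1.1) ∨ (z.1.1 ≤ l ∧ l ≤ y.1.1))) with h | h
      · exact h2 l h
      · rw [hxy.1]
        exact h3 l h

/-- The vertex set of the graded root `R_τ`. -/
def RootV (T0 : ℕ) (τ : ℕ → ℤ) : Type := Quotient (RootSetoid T0 τ)

/-- The grading `χ_τ` of `R_τ`. -/
def rootχ (T0 : ℕ) (τ : ℕ → ℤ) : RootV T0 τ → ℤ :=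
  Quotient.lift (fun x : RootVpre T0 τ => x.1.2) (fun _ _ h => h.1)

/-- The vertex `v_i^{k+1}` above `v_i^k`. -/
def rootStep (T0 : ℕ) (τ : ℕ → ℤ) (x : RootVpre T0 τ) : RootVpre T0 τ :=
  ⟨(x.1.1, x.1.2 + 1), x.2.1, by show τ x.1.1 ≤ x.1.2 + 1; have := x.2.2; omega⟩

/-- The edges of `R_τ`: each `v_i^k` is connected with `v_i^{k+1}`. -/
def rootAdj (T0 : ℕ) (τ : ℕ → ℤ) (u v : RootV T0 τ) : Prop :=
  (∃ x, u = Quotient.mk (RootSetoid T0 τ) x ∧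
        v = Quotient.mk (RootSetoid T0 τ) (rootStep T0 τ x)) ∨
  (∃ x, v = Quotient.mk (RootSetoid T0 τ) x ∧
        u = Quotient.mk (RootSetoid T0 τ) (rootStep T0 τ x))

/-- A vertex of `R_τ` (given `i ≤ T₀` and `τ i ≤ k`). -/
def rootMk (T0 : ℕ) (τ : ℕ → ℤ) (i : ℕ) (k : ℤ) (hi : i ≤ T0) (hk : τ i ≤ k) :
    RootV T0 τ :=
  Quotient.mk (RootSetoid T0 τ) ⟨(i, k), hi, hk⟩

/-- A local minimum point of a χ-graded graph. -/
def IsLocMin {V : Type} (Adj : V → V → Prop) (χ : V → ℤ) (v : V) : Prop :=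
  ∀ w, Adj v w → χ v < χ w

end

noncomputable section

/-- The delta-invariant `δ = #(ℕ∖Γ)` of a numerical semigroup `Γ`. -/
def sdelta (Γ : Set ℕ) : ℕ := Γᶜ.ncard

/-- `α_i = #{k ∈ ℕ∖Γ : k > i}`. -/
def salpha (Γ : Set ℕ) (i : ℕ) : ℕ := {k : ℕ | k ∉ Γ ∧ i < k}.ncard

/-- `τ_a(2t) = t(1−δ) + Σ_{j=0}^{t−1} ⌊(jp+a)/q⌋`. -/
def tauEven (Γ : Set ℕ) (p q a : ℕ) (t : ℕ) : ℤ :=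
  (t : ℤ) * (1 - (sdelta Γ : ℤ)) + ∑ j ∈ Finset.range t, (((j * p + a) / q : ℕ) : ℤ)

/-- The function `τ_a : {0,1,…,2t_a+2} → ℤ`:
`τ_a(2t)` as above and `τ_a(2t+1) = τ_a(2t+2) + α_{⌊(tp+a)/q⌋}`. -/
def tauFun (Γ : Set ℕ) (p q a : ℕ) (n : ℕ) : ℤ :=
  if n % 2 = 0 then tauEven Γ p q a (n / 2)
  else tauEven Γ p q a (n / 2 + 1) + (salpha Γ ((n / 2 * p + a) / q) : ℤ)

/-- `t_a = ⌊((2δ−1)q − a − 1)/p⌋`. -/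
def tA (Γ : Set ℕ) (p q a : ℕ) : ℤ :=
  ((2 * (sdelta Γ : ℤ) - 1) * (q : ℤ) - (a : ℤ) - 1) / (p : ℤ)

/-- The length `T₀ = 2t_a + 2` of the domain of `τ_a`. -/
def rootT0 (Γ : Set ℕ) (p q a : ℕ) : ℕ := (2 * tA Γ p q a + 2).toNat

end

/-! ### Auxiliary lemmas -/

section AuxLemmas

lemma tauFun_even_eq (Γ : Set ℕ) (p q a t : ℕ) :
    tauFun Γ p q a (2 * t) = tauEven Γ p q a t := by
  have h1 : (2 * t) % 2 = 0 := by omega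
  have h2 : (2 * t) / 2 = t := by omega
  simp [tauFun, h1, h2]

lemma tauFun_odd_eq (Γ : Set ℕ) (p q a t : ℕ) :
    tauFun Γ p q a (2 * t + 1)
      = tauEven Γ p q a (t + 1) + (salpha Γ ((t * p + a) / q) : ℤ) := by
  have h1 : (2 * t + 1) % 2 = 1 := by omega
  have h2 : (2 * t + 1) / 2 = t := by omega
  simp [tauFun, h1, h2]

lemma gamma_count (Γ : Set ℕ) (hfin : Γᶜ.Finite) (m : ℕ) :
    ({γ : ℕ | γ ∈ Γ ∧ γ ≤ m}.ncard : ℤ)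
      = (m : ℤ) + 1 - (sdelta Γ : ℤ) + (salpha Γ m : ℤ) := by
  classical
  have hIic : (Set.Iic m).ncard = m + 1 := by
    rw [← Finset.coe_Iic, Set.ncard_coe_finset, Nat.card_Iic]
  have hA : {γ : ℕ | γ ∈ Γ ∧ γ ≤ m}.Finite :=
    (Set.finite_Iic m).subset (fun x hx => hx.2)
  have hB : {k : ℕ | k ∉ Γ ∧ k ≤ m}.Finite :=
    (Set.finite_Iic m).subset (fun x hx => hx.2)
  have hC : {k : ℕ | k ∉ Γ ∧ m < k}.Finite :=
    hfin.subset (fun x hx => hx.1)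
  have hd1 : Disjoint {γ : ℕ | γ ∈ Γ ∧ γ ≤ m} {k : ℕ | k ∉ Γ ∧ k ≤ m} := by
    rw [Set.disjoint_left]; rintro x ⟨h1, _⟩ ⟨h2, _⟩; exact h2 h1
  have hd2 : Disjoint {k : ℕ | k ∉ Γ ∧ k ≤ m} {k : ℕ | k ∉ Γ ∧ m < k} := by
    rw [Set.disjoint_left]; rintro x ⟨_, h1⟩ ⟨_, h2⟩; omega
  have hsplit1 : {γ : ℕ | γ ∈ Γ ∧ γ ≤ m} ∪ {k : ℕ | k ∉ Γ ∧ k ≤ m} = Set.Iic m := by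
    ext x; by_cases hx : x ∈ Γ <;> simp [Set.mem_Iic, hx]
  have hsplit2 : {k : ℕ | k ∉ Γ ∧ k ≤ m} ∪ {k : ℕ | k ∉ Γ ∧ m < k} = Γᶜ := by
    ext x; by_cases hx : x ∈ Γ <;> simp [hx] <;> omega
  have e1 : {γ : ℕ | γ ∈ Γ ∧ γ ≤ m}.ncard + {k : ℕ | k ∉ Γ ∧ k ≤ m}.ncard = m + 1 := by
    rw [← Set.ncard_union_eq hd1 hA hB, hsplit1, hIic]
  have e2 : {k : ℕ | k ∉ Γ ∧ k ≤ m}.ncard + {k : ℕ | k ∉ Γ ∧ m < k}.ncard = sdelta Γ := by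
    rw [← Set.ncard_union_eq hd2 hB hC, hsplit2]; rfl
  have hsa : salpha Γ m = {k : ℕ | k ∉ Γ ∧ m < k}.ncard := rfl
  rw [hsa]
  omega

lemma tau_odd_val (Γ : Set ℕ) (hfin : Γᶜ.Finite) (p q a t : ℕ) :
    tauFun Γ p q a (2 * t + 1)
      = tauFun Γ p q a (2 * t) + ({γ : ℕ | γ ∈ Γ ∧ γ ≤ (t * p + a) / q}.ncard : ℤ) := by
  rw [tauFun_odd_eq, tauFun_even_eq, gamma_count Γ hfin]
  unfold tauEven
  rw [Finset.sum_range_succ]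
  push_cast
  ring

lemma tau_odd_gt_even (Γ : Set ℕ) (h0 : 0 ∈ Γ) (hfin : Γᶜ.Finite) (p q a t : ℕ) :
    tauFun Γ p q a (2 * t) < tauFun Γ p q a (2 * t + 1) := by
  rw [tau_odd_val Γ hfin]
  have hpos : 0 < {γ : ℕ | γ ∈ Γ ∧ γ ≤ (t * p + a) / q}.ncard := by
    rw [Set.ncard_pos ((Set.finite_Iic _).subset fun x hx => hx.2)]
    exact ⟨0, h0, Nat.zero_le _⟩
  exact lt_add_of_pos_right _ (by exact_mod_cast hpos)

lemma tau_odd_gt_even' (Γ : Set ℕ) (h0 : 0 ∈ Γ) (hfin : Γᶜ.Finite) (hδ1 : 1 ≤ sdelta Γ)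
    (p q a : ℕ) (hp : 1 ≤ p) (hq : 1 ≤ q) (t : ℕ) (ht : (t : ℤ) ≤ tA Γ p q a)
    (hsym : ∀ k : ℕ, k ≤ 2 * sdelta Γ - 1 → (k ∈ Γ ↔ (2 * sdelta Γ - 1 - k) ∉ Γ)) :
    tauFun Γ p q a (2 * t + 2) < tauFun Γ p q a (2 * t + 1) := by
  have h22 : 2 * t + 2 = 2 * (t + 1) := by ring
  rw [h22, tauFun_even_eq, tauFun_odd_eq]
  have hfrob : (2 * sdelta Γ - 1) ∉ Γ := by
    have := (hsym 0 (by omega)).mp h0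
    simpa using this
  have hm : (t * p + a) / q < 2 * sdelta Γ - 1 := by
    rw [Nat.div_lt_iff_lt_mul hq]
    have h1 : (t : ℤ) * p ≤ (2 * (sdelta Γ : ℤ) - 1) * q - a - 1 := by
      exact (Int.le_ediv_iff_mul_le (by exact_mod_cast hp : (0 : ℤ) < (p : ℤ))).mp ht
    zify [show 1 ≤ 2 * sdelta Γ by omega]
    push_cast at h1 ⊢
    linarith
  have hαpos : 0 < salpha Γ ((t * p + a) / q) := by
    rw [salpha, Set.ncard_pos (hfin.subset fun x hx => hx.1)]
    exact ⟨2 * sdelta Γ - 1, hfrob, hm⟩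
  exact lt_add_of_pos_right _ (by exact_mod_cast hαpos)

end AuxLemmas

section GraphLemmas

lemma rootχ_mk' (T0 : ℕ) (τ : ℕ → ℤ) (x : RootVpre T0 τ) :
    rootχ T0 τ (Quotient.mk (RootSetoid T0 τ) x) = x.1.2 := rfl

lemma isLocMin_even (T0 : ℕ) (τ : ℕ → ℤ)
    (hodd : ∀ n, n ≤ T0 → n % 2 = 1 →
      τ (n - 1) < τ n ∧ (n + 1 ≤ T0 → τ (n + 1) < τ n))
    (i : ℕ) (hie : i % 2 = 0) (k : ℤ) (hi : i ≤ T0) (hk : τ i ≤ k) (hki : k = τ i) :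
    IsLocMin (rootAdj T0 τ) (rootχ T0 τ) (rootMk T0 τ i k hi hk) := by
  intro w hw
  rcases hw with ⟨x, hv, hw⟩ | ⟨x, hw, hv⟩
  · unfold rootMk at hv ⊢
    rw [hv, hw, rootχ_mk', rootχ_mk']
    simp only [rootStep]
    omega
  · exfalso
    unfold rootMk at hv
    have he : (RootSetoid T0 τ).r ⟨(i, k), hi, hk⟩ (rootStep T0 τ x) := Quotient.exact hv
    obtain ⟨he1, he2⟩ := he
    simp only [rootStep] at he1 he2
    have hxτ : τ x.1.1 ≤ x.1.2 := x.2.2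
    have hxT : x.1.1 ≤ T0 := x.2.1
    rcases lt_trichotomy x.1.1 i with hlt | heq | hgt
    · have h1 : τ (i - 1) ≤ k := he2 (i - 1) (by omega)
      have h2 := (hodd (i - 1) (by omega) (by omega)).2 (by omega)
      have e : i - 1 + 1 = i := by omega
      rw [e] at h2
      omega
    · rw [heq] at hxτ
      omega
    · have h1 : τ (i + 1) ≤ k := he2 (i + 1) (by omega)
      have h2 := (hodd (i + 1) (by omega) (by omega)).1
      have e : i + 1 - 1 = i := by omega
      rw [e] at h2
      omega

noncomputable def rootF (T0 : ℕ) (τ : ℕ → ℤ) (t : ℕ) : RootV T0 τ :=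
  Quotient.mk (RootSetoid T0 τ) ⟨(2 * t ⊓ T0, τ (2 * t ⊓ T0)), min_le_right _ _, le_rfl⟩

lemma locmin_set (T0 : ℕ) (τ : ℕ → ℤ) (hT0 : T0 % 2 = 0)
    (hodd : ∀ n, n ≤ T0 → n % 2 = 1 →
      τ (n - 1) < τ n ∧ (n + 1 ≤ T0 → τ (n + 1) < τ n)) :
    {v : RootV T0 τ | IsLocMin (rootAdj T0 τ) (rootχ T0 τ) v}
      = rootF T0 τ '' Set.Iic (T0 / 2) := by
  ext v
  simp only [Set.mem_setOf_eq, Set.mem_image, Set.mem_Iic]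
  constructor
  · intro hv
    obtain ⟨x, rfl⟩ := Quotient.exists_rep v
    obtain ⟨⟨j, k⟩, hj, hk⟩ := x
    dsimp only at hj hk
    have hkj : k = τ j := by
      by_contra hne
      have hlt : τ j ≤ k - 1 := by
        rcases lt_or_eq_of_le hk with h | h
        · omega
        · exact absurd h.symm hne
      have hstep : rootStep T0 τ ⟨(j, k - 1), hj, hlt⟩ = ⟨(j, k), hj, hk⟩ := by
        apply Subtype.ext
        show (j, k - 1 + 1) = (j, k)
        rw [show k - 1 + 1 = k by ring]
      have hadj : rootAdj T0 τ (Quotient.mk _ ⟨(j, k), hj, hk⟩)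
          (Quotient.mk _ ⟨(j, k - 1), hj, hlt⟩) :=
        Or.inr ⟨⟨(j, k - 1), hj, hlt⟩, rfl, by rw [hstep]⟩
      have := hv _ hadj
      erw [rootχ_mk', rootχ_mk'] at this
      dsimp only at this
      omega
    have hje : j % 2 = 0 := by
      by_contra hne
      have hjo : j % 2 = 1 := by omega
      have h1 := (hodd j hj hjo).1
      have hj1 : j - 1 ≤ T0 := by omega
      have hy2 : τ (j - 1) ≤ τ j - 1 := by omega
      have hrel : (RootSetoid T0 τ).r ⟨(j, k), hj, hk⟩
          (rootStep T0 τ ⟨(j - 1, τ j - 1), hj1, hy2⟩) := by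
        constructor
        · show k = τ j - 1 + 1
          omega
        · intro l hl
          simp only [rootStep] at hl
          show τ l ≤ k
          have hl' : l = j - 1 ∨ l = j := by omega
          rcases hl' with rfl | rfl <;> omega
      have hadj : rootAdj T0 τ (Quotient.mk _ ⟨(j, k), hj, hk⟩)
          (Quotient.mk _ ⟨(j - 1, τ j - 1), hj1, hy2⟩) :=
        Or.inr ⟨⟨(j - 1, τ j - 1), hj1, hy2⟩, rfl, Quotient.sound hrel⟩
      have := hv _ hadj
      erw [rootχ_mk', rootχ_mk'] at this
      dsimp only at this
      omega
    refine ⟨j / 2, by omega, ?_⟩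
    unfold rootF
    have hmin : 2 * (j / 2) ⊓ T0 = j := by omega
    refine congrArg (Quotient.mk _) (Subtype.ext ?_)
    show (2 * (j / 2) ⊓ T0, τ (2 * (j / 2) ⊓ T0)) = ((j : ℕ), k)
    rw [hmin, hkj]
  · rintro ⟨t', ht', rfl⟩
    exact isLocMin_even T0 τ hodd (2 * t' ⊓ T0) (by omega) _ (min_le_right _ _) le_rfl rfl

lemma rootF_ne (T0 : ℕ) (τ : ℕ → ℤ)
    (hodd : ∀ n, n ≤ T0 → n % 2 = 1 →
      τ (n - 1) < τ n ∧ (n + 1 ≤ T0 → τ (n + 1) < τ n))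
    (s t : ℕ) (hs : s < t) (ht : t ≤ T0 / 2) : rootF T0 τ s ≠ rootF T0 τ t := by
  intro h
  have he := Quotient.exact h
  obtain ⟨he1, he2⟩ := he
  simp only at he1 he2
  have hmins : 2 * s ⊓ T0 = 2 * s := by omega
  have hmint : 2 * t ⊓ T0 = 2 * t := by omega
  have h1 : τ (2 * s + 1) ≤ τ (2 * s ⊓ T0) := he2 (2 * s + 1) (by omega)
  have h2 := (hodd (2 * s + 1) (by omega) (by omega)).1
  have e : 2 * s + 1 - 1 = 2 * s := by omega
  rw [e] at h2
  rw [hmins] at h1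
  omega

lemma locmin_count (T0 : ℕ) (τ : ℕ → ℤ) (hT0 : T0 % 2 = 0)
    (hodd : ∀ n, n ≤ T0 → n % 2 = 1 →
      τ (n - 1) < τ n ∧ (n + 1 ≤ T0 → τ (n + 1) < τ n)) :
    {v : RootV T0 τ | IsLocMin (rootAdj T0 τ) (rootχ T0 τ) v}.ncard = T0 / 2 + 1 := by
  rw [locmin_set T0 τ hT0 hodd, Set.ncard_image_of_injOn, ← Finset.coe_Iic,
    Set.ncard_coe_finset, Nat.card_Iic]
  intro s hs t ht h
  by_contra hne
  rcases lt_or_gt_of_ne hne with hlt | hlt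
  · exact rootF_ne T0 τ hodd s t hlt ht h
  · exact rootF_ne T0 τ hodd t s hlt hs h.symm

end GraphLemmas

open scoped Classical in
/-- (Remark 4.5 of the paper.)  For `0 ≤ t ≤ t_a`:
(i) `τ_a(2t+1) = τ_a(2t) + #{γ ∈ Γ : γ ≤ (tp+a)/q}`; (ii) `τ_a(2t+1) > τ_a(2t)`;
(iii) if `Γ` is symmetric then `τ_a(2t+1) > τ_a(2t+2)`.  Consequently, when `Γ`
is symmetric, the graded root `(R_{τ_a},χ_{τ_a})` has exactly `t_a + 2` local
minimum points, corresponding to the values `τ_a(2t)`, `t = 0,…,t_a+1`. -/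
theorem tau_odd_values_and_local_minima
    (Γ : Set ℕ)
    (h0 : 0 ∈ Γ) (hadd : ∀ x ∈ Γ, ∀ y ∈ Γ, x + y ∈ Γ)
    (hfin : Γᶜ.Finite) (hδ1 : 1 ≤ sdelta Γ)
    (p q a : ℕ) (hp : 1 ≤ p) (hq : 1 ≤ q) (ha : a < p)
    (t : ℕ) (ht : (t : ℤ) ≤ tA Γ p q a) :
    tauFun Γ p q a (2 * t + 1)
        = tauFun Γ p q a (2 * t) + ({γ : ℕ | γ ∈ Γ ∧ γ ≤ (t * p + a) / q}.ncard : ℤ)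
      ∧ tauFun Γ p q a (2 * t) < tauFun Γ p q a (2 * t + 1)
      ∧ ((∀ k : ℕ, k ≤ 2 * sdelta Γ - 1 → (k ∈ Γ ↔ (2 * sdelta Γ - 1 - k) ∉ Γ)) →
          tauFun Γ p q a (2 * t + 2) < tauFun Γ p q a (2 * t + 1))
      ∧ ((∀ k : ℕ, k ≤ 2 * sdelta Γ - 1 → (k ∈ Γ ↔ (2 * sdelta Γ - 1 - k) ∉ Γ)) →
          {v : RootV (rootT0 Γ p q a) (tauFun Γ p q a) |
              IsLocMin (rootAdj (rootT0 Γ p q a) (tauFun Γ p q a))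
                (rootχ (rootT0 Γ p q a) (tauFun Γ p q a)) v}.ncard
            = (tA Γ p q a + 2).toNat
          ∧ ∀ (t' : ℕ) (h1 : 2 * t' ≤ rootT0 Γ p q a)
              (h2 : tauFun Γ p q a (2 * t') ≤ tauFun Γ p q a (2 * t')),
              (t' : ℤ) ≤ tA Γ p q a + 1 →
              IsLocMin (rootAdj (rootT0 Γ p q a) (tauFun Γ p q a))
                (rootχ (rootT0 Γ p q a) (tauFun Γ p q a))
                (rootMk (rootT0 Γ p q a) (tauFun Γ p q a) (2 * t')
                  (tauFun Γ p q a (2 * t')) h1 h2)) := by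
  have ht0 : (0 : ℤ) ≤ (t : ℤ) := Int.ofNat_nonneg t
  have htA0 : 0 ≤ tA Γ p q a := le_trans ht0 ht
  refine ⟨tau_odd_val Γ hfin p q a t, tau_odd_gt_even Γ h0 hfin p q a t,
    fun hsym => tau_odd_gt_even' Γ h0 hfin hδ1 p q a hp hq t ht hsym, fun hsym => ?_⟩
  have hT0 : rootT0 Γ p q a = 2 * (tA Γ p q a).toNat + 2 := by
    unfold rootT0; omega
  have hodd : ∀ n, n ≤ rootT0 Γ p q a → n % 2 = 1 →
      tauFun Γ p q a (n - 1) < tauFun Γ p q a n ∧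
      (n + 1 ≤ rootT0 Γ p q a → tauFun Γ p q a (n + 1) < tauFun Γ p q a n) := by
    intro n hn hn1
    obtain ⟨t', rfl⟩ : ∃ t', n = 2 * t' + 1 := ⟨n / 2, by omega⟩
    have ht' : (t' : ℤ) ≤ tA Γ p q a := by
      rw [hT0] at hn
      omega
    constructor
    · rw [show 2 * t' + 1 - 1 = 2 * t' by omega]
      exact tau_odd_gt_even Γ h0 hfin p q a t'
    · intro _
      rw [show 2 * t' + 1 + 1 = 2 * t' + 2 by omega]
      exact tau_odd_gt_even' Γ h0 hfin hδ1 p q a hp hq t' ht' hsym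
  refine ⟨?_, ?_⟩
  · rw [locmin_count (rootT0 Γ p q a) (tauFun Γ p q a) (by omega) hodd]
    omega
  · intro t' h1 h2 _
    exact isLocMin_even _ _ hodd (2 * t') (by omega) _ h1 h2 rfl
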